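/- For every s ∈ S, the hitting time N of Acc satisfies ∫_{{ω : N(ω) < ∞}} N(ω) dμ_s(ω) < ∞; consequently the conditional expectation of N given that the path visits Acc is finite (whenever μ_s({N < ∞}) > 0), and its maximum over the finitely many states s with μ_s({N < ∞}) > 0 is finite. -/

import Mathlib

open MeasureTheory Set
open scoped ENNReal Classical

variable {S : Type*}

def IsPathMeasure [MeasurableSpace S] (P : S → PMF S) (μ : S → Measure (ℕ → S)) : Prop :=
  (∀ s, IsProbabilityMeasure (μ s)) ∧
    ∀ (s : S) (n : ℕ) (x : ℕ → S),
      μ s {ω | ∀ i ≤ n, ω i = x i} =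
        (if x 0 = s then 1 else 0) * ∏ i ∈ Finset.range n, (P (x i)) (x (i + 1))

noncomputable def Rw (Acc : Set S) (γacc rn : ℝ) (s : S) : ℝ :=
  if s ∈ Acc then (1 - γacc) * rn else 0

noncomputable def Γw (Acc : Set S) (γacc γ : ℝ) (s : S) : ℝ :=
  if s ∈ Acc then γacc else γ

noncomputable def Ret (Acc : Set S) (γacc γ rn : ℝ) (ω : ℕ → S) : ℝ :=
  ∑' t : ℕ, Rw Acc γacc rn (ω (t + 1)) * ∏ k ∈ Finset.range t, Γw Acc γacc γ (ω (k + 1))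

noncomputable def Val [MeasurableSpace S] (Acc : Set S) (γacc γ rn : ℝ)
    (μ : S → Measure (ℕ → S)) (s : S) : ℝ :=
  ∫ ω, Ret Acc γacc γ rn ω ∂ (μ s)

noncomputable def hitTime (Acc : Set S) (ω : ℕ → S) : ℝ≥0∞ :=
  ⨅ (t : ℕ) (_ : ω t ∈ Acc), (t : ℝ≥0∞)

namespace HitAux

variable [Fintype S] (P : S → PMF S) (Acc : Set S)

def Good (s : S) : Prop :=
  ∃ (n : ℕ) (x : ℕ → S), x 0 = s ∧ x n ∈ Acc ∧
    0 < ∏ i ∈ Finset.range n, (P (x i)) (x (i + 1))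

def Bset : Set S := {t | Good P Acc t ∧ t ∉ Acc}

noncomputable def gfun : ℕ → S → ℝ≥0∞
  | 0 => fun t => if t ∈ Bset P Acc then 1 else 0
  | n + 1 => fun t => if t ∈ Bset P Acc then ∑ u : S, (P t) u * gfun n u else 0

lemma sum_P_eq_one (t : S) : ∑ u : S, (P t) u = 1 := by
  rw [← tsum_fintype (L := SummationFilter.unconditional _)]; exact (P t).tsum_coe

lemma gfun_eq_zero (n : ℕ) {t : S} (h : t ∉ Bset P Acc) : gfun P Acc n t = 0 := by
  cases n <;> simp [gfun, h]

lemma gfun_le_one : ∀ n t, gfun P Acc n t ≤ 1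
  | 0, t => by simp only [gfun]; split <;> simp
  | n+1, t => by
      simp only [gfun]; split
      · calc ∑ u : S, (P t) u * gfun P Acc n u
              ≤ ∑ u : S, (P t) u * 1 :=
                Finset.sum_le_sum fun u _ => mul_le_mul_right (gfun_le_one n u) _
            _ = 1 := by simp [sum_P_eq_one]
      · simp

lemma gfun_succ_le (n : ℕ) (t : S) : gfun P Acc (n+1) t ≤ gfun P Acc n t := by
  induction n generalizing t with
  | zero =>
      simp only [gfun]; split
      · calc ∑ u : S, (P t) u * (if u ∈ Bset P Acc then (1:ℝ≥0∞) else 0)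
            ≤ ∑ u : S, (P t) u * 1 :=
              Finset.sum_le_sum fun u _ => mul_le_mul_right (by split <;> simp) _
          _ = 1 := by simp [sum_P_eq_one]
      · simp
  | succ n ih =>
      show gfun P Acc ((n+1)+1) t ≤ gfun P Acc (n+1) t
      simp only [gfun]; split
      · exact Finset.sum_le_sum fun u _ => mul_le_mul_right (ih u) _
      · simp

lemma gfun_anti (t : S) {k n : ℕ} (h : k ≤ n) : gfun P Acc n t ≤ gfun P Acc k t :=
  antitone_nat_of_succ_le (f := fun n => gfun P Acc n t) (fun m => gfun_succ_le P Acc m t) h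

lemma gfun_add_le (n : ℕ) (c : ℝ≥0∞) (h : ∀ u ∈ Bset P Acc, gfun P Acc n u ≤ c) :
    ∀ (m : ℕ) (t : S), gfun P Acc (m + n) t ≤ c * gfun P Acc m t
  | 0, t => by
      by_cases ht : t ∈ Bset P Acc
      · simpa [gfun, ht] using h t ht
      · simp [gfun_eq_zero P Acc _ ht]
  | m+1, t => by
      by_cases ht : t ∈ Bset P Acc
      · have e : m + 1 + n = (m + n) + 1 := by omega
        rw [e]
        show (if t ∈ Bset P Acc then ∑ u : S, (P t) u * gfun P Acc (m+n) u else 0) ≤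
          c * (if t ∈ Bset P Acc then ∑ u : S, (P t) u * gfun P Acc m u else 0)
        rw [if_pos ht, if_pos ht, Finset.mul_sum]
        refine Finset.sum_le_sum fun u _ => ?_
        calc (P t) u * gfun P Acc (m+n) u ≤ (P t) u * (c * gfun P Acc m u) :=
              mul_le_mul_right (gfun_add_le n c h m u) _
          _ = c * ((P t) u * gfun P Acc m u) := by ring
      · simp [gfun_eq_zero P Acc _ ht]

lemma gfun_add_prod_le : ∀ (n : ℕ) (t : S) (x : ℕ → S), x 0 = t →
    (∀ i, i < n → x i ∈ Bset P Acc) → x n ∉ Bset P Acc →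
    gfun P Acc n t + ∏ i ∈ Finset.range n, (P (x i)) (x (i+1)) ≤ 1
  | 0, t, x, h0, _, hn => by
      rw [gfun_eq_zero P Acc _ (h0 ▸ hn)]; simp
  | n+1, t, x, h0, hmem, hend => by
      have ht : t ∈ Bset P Acc := h0 ▸ hmem 0 (by omega)
      have IH := gfun_add_prod_le n (x 1) (fun i => x (i+1)) rfl
        (fun i hi => hmem (i+1) (by omega)) hend
      rw [Finset.prod_range_succ']
      show (if t ∈ Bset P Acc then ∑ u : S, (P t) u * gfun P Acc n u else 0) + _ ≤ 1
      rw [if_pos ht, h0]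
      rw [← Finset.add_sum_erase _ _ (Finset.mem_univ (x 1))]
      have key : (P t) (x 1) * gfun P Acc n (x 1) +
          (∏ i ∈ Finset.range n, (P (x (i+1))) (x (i+1+1))) * (P t) (x 1) ≤ (P t) (x 1) := by
        calc (P t) (x 1) * gfun P Acc n (x 1) +
              (∏ i ∈ Finset.range n, (P (x (i+1))) (x (i+1+1))) * (P t) (x 1)
            = (P t) (x 1) * (gfun P Acc n (x 1) +
                ∏ i ∈ Finset.range n, (P (x (i+1))) (x (i+1+1))) := by ring
          _ ≤ (P t) (x 1) * 1 := mul_le_mul_right IH _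
          _ = (P t) (x 1) := mul_one _
      calc (P t) (x 1) * gfun P Acc n (x 1) +
            (∑ u ∈ Finset.univ.erase (x 1), (P t) u * gfun P Acc n u) +
            (∏ i ∈ Finset.range n, (P (x (i+1))) (x (i+1+1))) * (P t) (x 1)
          = ((P t) (x 1) * gfun P Acc n (x 1) +
            (∏ i ∈ Finset.range n, (P (x (i+1))) (x (i+1+1))) * (P t) (x 1)) +
            ∑ u ∈ Finset.univ.erase (x 1), (P t) u * gfun P Acc n u := by ring
        _ ≤ (P t) (x 1) + ∑ u ∈ Finset.univ.erase (x 1), (P t) u * 1 :=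
            add_le_add key (Finset.sum_le_sum fun u _ => mul_le_mul_right (gfun_le_one P Acc n u) _)
        _ = ∑ u : S, (P t) u := by
            simp only [mul_one]
            exact (Finset.add_sum_erase _ _ (Finset.mem_univ (x 1)))
        _ = 1 := sum_P_eq_one P t



lemma prod_pos_iff {n : ℕ} {f : ℕ → ℝ≥0∞} :
    0 < ∏ i ∈ Finset.range n, f i ↔ ∀ i ∈ Finset.range n, 0 < f i :=
  CanonicallyOrderedAdd.prod_pos

set_option linter.unusedSectionVars false

lemma exists_gfun_lt_one {u : S} (hu : Good P Acc u) (hA : u ∉ Acc) :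
    ∃ n, gfun P Acc n u < 1 := by
  have hQ : ∃ k, ∃ x : ℕ → S, x 0 = u ∧ x k ∈ Acc ∧
      0 < ∏ i ∈ Finset.range k, (P (x i)) (x (i + 1)) := hu
  set n := Nat.find hQ with hn
  obtain ⟨x, hx0, hxn, hpos⟩ := Nat.find_spec hQ
  have hfac : ∀ i ∈ Finset.range n, 0 < (P (x i)) (x (i+1)) := prod_pos_iff.mp hpos
  have hmem : ∀ i, i < n → x i ∈ Bset P Acc := by
    intro i hi
    constructor
    · -- Good (x i) : shifted path
      refine ⟨n - i, fun j => x (i + j), rfl, ?_, ?_⟩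
      · show x (i + (n - i)) ∈ Acc
        have h2 : i + (n - i) = n := by omega
        rw [h2]; exact hxn
      · rw [prod_pos_iff]
        intro j hj
        simp only [Finset.mem_range] at hj
        exact hfac (i + j) (Finset.mem_range.mpr (by omega))
    · -- x i ∉ Acc, by minimality
      intro hacc
      rcases Nat.eq_zero_or_pos i with hi0 | hip
      · exact hA (by rw [hi0] at hacc; rwa [hx0] at hacc)
      · refine Nat.find_min hQ hi ⟨x, hx0, hacc, ?_⟩
        rw [prod_pos_iff]
        intro j hj
        simp only [Finset.mem_range] at hj
        exact hfac j (Finset.mem_range.mpr (by omega))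
  have hxnB : x n ∉ Bset P Acc := fun h => h.2 hxn
  have hle := gfun_add_prod_le P Acc n u x hx0 hmem hxnB
  have hle1 := gfun_le_one P Acc n u
  refine ⟨n, lt_of_le_of_ne hle1 fun heq => ?_⟩
  rw [heq] at hle
  have : (1:ℝ≥0∞) + ∏ i ∈ Finset.range n, (P (x i)) (x (i+1)) ≤ 1 + 0 := by simpa using hle
  have := (ENNReal.add_le_add_iff_left ENNReal.one_ne_top).mp this
  exact absurd (le_antisymm this zero_le) (ne_of_gt hpos)

def xof (n : ℕ) (y : Fin (n+1) → S) : ℕ → S := fun i => y ⟨min i n, by omega⟩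

lemma xof_eq (n : ℕ) (y : Fin (n+1) → S) {i : ℕ} (h : i ≤ n) :
    xof n y i = y ⟨i, by omega⟩ := by
  unfold xof; congr 1; exact Fin.ext (by simp [Nat.min_eq_left h])

lemma xof_cons_zero (n : ℕ) (a : S) (z : Fin (n+1) → S) :
    xof (n+1) (Fin.cons a z) 0 = a := by
  rw [xof_eq _ _ (by omega)]
  exact congrArg _ (Fin.ext rfl)

lemma xof_cons_succ (n : ℕ) (a : S) (z : Fin (n+1) → S) (i : ℕ) :
    xof (n+1) (Fin.cons a z) (i+1) = xof n z i := by
  unfold xof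
  have h1 : (⟨min (i+1) (n+1), by omega⟩ : Fin (n+2)) = Fin.succ ⟨min i n, by omega⟩ :=
    Fin.ext (by simp [Fin.val_succ])
  rw [h1, Fin.cons_succ]

lemma ite_and_mul (p q : Prop) :
    (if (p ∧ q) then (1:ℝ≥0∞) else 0) = (if p then 1 else 0) * (if q then 1 else 0) := by
  by_cases hp : p <;> by_cases hq : q <;> simp [hp, hq]

lemma sum_xof (n : ℕ) (s : S) :
    (∑ y : Fin (n+1) → S,
      (if ∀ i ≤ n, xof n y i ∈ Bset P Acc then (1:ℝ≥0∞) else 0) *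
        ((if xof n y 0 = s then 1 else 0) *
          ∏ i ∈ Finset.range n, (P (xof n y i)) (xof n y (i+1)))) = gfun P Acc n s := by
  induction n generalizing s with
  | zero =>
      rw [← (Equiv.funUnique (Fin 1) S).symm.sum_comp]
      have h1 : ∀ a : S, ∀ i : ℕ, xof 0 ((Equiv.funUnique (Fin 1) S).symm a) i = a := by
        intro a i; unfold xof; rfl
      simp only [h1]
      have : ∀ a : S,
          (if ∀ i ≤ 0, a ∈ Bset P Acc then (1:ℝ≥0∞) else 0) *
            ((if a = s then 1 else 0) * ∏ i ∈ Finset.range 0, (P a) a)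
          = if a = s then (if a ∈ Bset P Acc then (1:ℝ≥0∞) else 0) else 0 := by
        intro a
        by_cases ha : a ∈ Bset P Acc <;> by_cases has : a = s <;>
          simp [ha, has]
      rw [Finset.sum_congr rfl fun a _ => this a, Finset.sum_ite_eq' Finset.univ s]
      simp [gfun]
  | succ n ih =>
      rw [← (Fin.consEquiv (fun _ : Fin (n+2) => S)).sum_comp]
      rw [Fintype.sum_prod_type]
      -- simplify each term
      have hterm : ∀ (a : S) (z : Fin (n+1) → S),
          (if ∀ i ≤ n+1, xof (n+1) ((Fin.consEquiv (fun _ : Fin (n+2) => S)) (a, z)) i ∈ Bset P Acc then (1:ℝ≥0∞) else 0) *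
            ((if xof (n+1) ((Fin.consEquiv (fun _ : Fin (n+2) => S)) (a, z)) 0 = s then 1 else 0) *
              ∏ i ∈ Finset.range (n+1),
                (P (xof (n+1) ((Fin.consEquiv (fun _ : Fin (n+2) => S)) (a, z)) i)) (xof (n+1) ((Fin.consEquiv (fun _ : Fin (n+2) => S)) (a, z)) (i+1)))
          = if a = s then
              ((if a ∈ Bset P Acc then (1:ℝ≥0∞) else 0) *
               ((if ∀ i ≤ n, xof n z i ∈ Bset P Acc then (1:ℝ≥0∞) else 0) *
                ((∏ i ∈ Finset.range n, (P (xof n z i)) (xof n z (i+1))) *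
                  (P a) (xof n z 0)))) else 0 := by
        intro a z
        show _ = _
        have hez : (Fin.consEquiv (fun _ : Fin (n+2) => S)) (a, z) = Fin.cons a z := rfl
        rw [hez]
        have hc0 := xof_cons_zero (S := S) n a z
        have hcs := xof_cons_succ (S := S) n a z
        have hcond : (∀ i ≤ n+1, xof (n+1) (Fin.cons a z) i ∈ Bset P Acc) ↔
            (a ∈ Bset P Acc ∧ ∀ i ≤ n, xof n z i ∈ Bset P Acc) := by
          constructor
          · intro h
            refine ⟨hc0 ▸ h 0 (by omega), fun i hi => hcs i ▸ h (i+1) (by omega)⟩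
          · rintro ⟨h1, h2⟩ i hi
            match i with
            | 0 => rw [hc0]; exact h1
            | (j+1) => rw [hcs j]; exact h2 j (by omega)
        have hprod : ∏ i ∈ Finset.range (n+1),
            (P (xof (n+1) (Fin.cons a z) i)) (xof (n+1) (Fin.cons a z) (i+1))
            = (∏ i ∈ Finset.range n, (P (xof n z i)) (xof n z (i+1))) *
                (P a) (xof n z 0) := by
          rw [Finset.prod_range_succ']
          congr 1
          · refine Finset.prod_congr rfl fun i _ => ?_
            rw [hcs i, show i + 1 + 1 = (i+1)+1 from rfl, hcs (i+1)]
        rw [hprod, hc0, if_congr hcond rfl rfl]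
        by_cases has : a = s
        · subst has
          by_cases haB : a ∈ Bset P Acc <;>
            by_cases hC : ∀ i ≤ n, xof n z i ∈ Bset P Acc <;>
            simp [haB, hC] <;> ring
        · simp [has]
      rw [Finset.sum_congr rfl fun a _ => Finset.sum_congr rfl fun z _ => hterm a z]
      rw [Finset.sum_comm]
      rw [Finset.sum_congr rfl fun z _ => Finset.sum_ite_eq' Finset.univ s _]
      simp only [Finset.mem_univ, if_true]
      -- now: ∑ z, [s∈B] * ([C z] * (∏ z * P s (xof n z 0))) = gfun (n+1) s
      by_cases hs : s ∈ Bset P Acc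
      · simp only [hs, if_true, one_mul]
        show (∑ z : Fin (n+1) → S,
            (if ∀ i ≤ n, xof n z i ∈ Bset P Acc then (1:ℝ≥0∞) else 0) *
              ((∏ i ∈ Finset.range n, (P (xof n z i)) (xof n z (i+1))) * (P s) (xof n z 0)))
          = gfun P Acc (n+1) s
        have expand : ∀ z : Fin (n+1) → S,
            (if ∀ i ≤ n, xof n z i ∈ Bset P Acc then (1:ℝ≥0∞) else 0) *
              ((∏ i ∈ Finset.range n, (P (xof n z i)) (xof n z (i+1))) * (P s) (xof n z 0))
            = ∑ u : S, (if xof n z 0 = u then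
                (P s) u * ((if ∀ i ≤ n, xof n z i ∈ Bset P Acc then (1:ℝ≥0∞) else 0) *
                  ((if xof n z 0 = u then (1:ℝ≥0∞) else 0) *
                    ∏ i ∈ Finset.range n, (P (xof n z i)) (xof n z (i+1)))) else 0) := by
          intro z
          rw [Finset.sum_ite_eq Finset.univ (xof n z 0)]
          simp only [Finset.mem_univ, if_true, if_pos rfl]
          ring
        rw [Finset.sum_congr rfl fun z _ => expand z]
        rw [Finset.sum_comm]
        have collapse : ∀ u : S,
            (∑ z : Fin (n+1) → S, (if xof n z 0 = u then
                (P s) u * ((if ∀ i ≤ n, xof n z i ∈ Bset P Acc then (1:ℝ≥0∞) else 0) *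
                  ((if xof n z 0 = u then (1:ℝ≥0∞) else 0) *
                    ∏ i ∈ Finset.range n, (P (xof n z i)) (xof n z (i+1)))) else 0))
            = (P s) u * gfun P Acc n u := by
          intro u
          rw [← ih u, Finset.mul_sum]
          refine Finset.sum_congr rfl fun z _ => ?_
          by_cases hz : xof n z 0 = u <;> simp [hz]
        rw [Finset.sum_congr rfl fun u _ => collapse u]
        show _ = (if s ∈ Bset P Acc then ∑ u : S, (P s) u * gfun P Acc n u else 0)
        rw [if_pos hs]
      · simp only [hs, if_false, zero_mul, Finset.sum_const_zero]
        show (0:ℝ≥0∞) = (if s ∈ Bset P Acc then ∑ u : S, (P s) u * gfun P Acc n u else 0)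
        rw [if_neg hs]


section Meas
variable [MeasurableSpace S] [MeasurableSingletonClass S]

lemma measSet (T : Set S) : MeasurableSet T := T.toFinite.measurableSet

lemma measCylEq (n : ℕ) (c : ℕ → S) :
    MeasurableSet {ω : ℕ → S | ∀ i ≤ n, ω i = c i} := by
  have : {ω : ℕ → S | ∀ i ≤ n, ω i = c i}
      = ⋂ i, ⋂ (_ : i ≤ n), (fun ω : ℕ → S => ω i) ⁻¹' {c i} := by
    ext ω; simp
  rw [this]
  exact MeasurableSet.iInter fun i => MeasurableSet.iInter fun _ =>
    (measurable_pi_apply i) (measurableSet_singleton _)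

lemma measCylMem (n : ℕ) (A : ℕ → Set S) :
    MeasurableSet {ω : ℕ → S | ∀ i ≤ n, ω i ∈ A i} := by
  have : {ω : ℕ → S | ∀ i ≤ n, ω i ∈ A i}
      = ⋂ i, ⋂ (_ : i ≤ n), (fun ω : ℕ → S => ω i) ⁻¹' (A i) := by
    ext ω; simp
  rw [this]
  exact MeasurableSet.iInter fun i => MeasurableSet.iInter fun _ =>
    (measurable_pi_apply i) (measSet _)

lemma meas_cyl (μ : S → Measure (ℕ → S)) (hμ : IsPathMeasure P μ) (s : S) (n : ℕ)
    (A : ℕ → Set S) :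
    μ s {ω | ∀ i ≤ n, ω i ∈ A i} =
      ∑ y : Fin (n+1) → S,
        (if ∀ i ≤ n, xof n y i ∈ A i then (1:ℝ≥0∞) else 0) *
          ((if xof n y 0 = s then 1 else 0) *
            ∏ i ∈ Finset.range n, (P (xof n y i)) (xof n y (i+1))) := by
  set T : Finset (Fin (n+1) → S) :=
    Finset.univ.filter (fun y => ∀ i ≤ n, xof n y i ∈ A i) with hT
  have hxofself : ∀ (ω : ℕ → S) (i : ℕ), i ≤ n → xof n (fun j : Fin (n+1) => ω j) i = ω i := by
    intro ω i hi
    rw [xof_eq _ _ hi]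
  have hxofy : ∀ (y : Fin (n+1) → S) (j : Fin (n+1)), xof n y j = y j := by
    intro y j
    rw [xof_eq _ _ (by omega : (j:ℕ) ≤ n)]
  have hset : {ω : ℕ → S | ∀ i ≤ n, ω i ∈ A i}
      = ⋃ y ∈ T, {ω : ℕ → S | ∀ i ≤ n, ω i = xof n y i} := by
    ext ω
    simp only [Set.mem_setOf_eq, Set.mem_iUnion, exists_prop]
    constructor
    · intro h
      refine ⟨fun j => ω j, ?_, fun i hi => (hxofself ω i hi).symm⟩
      rw [hT, Finset.mem_filter]
      exact ⟨Finset.mem_univ _, fun i hi => (hxofself ω i hi).symm ▸ h i hi⟩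
    · rintro ⟨y, hy, hω⟩
      rw [hT, Finset.mem_filter] at hy
      intro i hi
      rw [hω i hi]
      exact hy.2 i hi
  have hdisj : (↑T : Set (Fin (n+1) → S)).PairwiseDisjoint
      (fun y => {ω : ℕ → S | ∀ i ≤ n, ω i = xof n y i}) := by
    intro y _ y' _ hne
    rw [Function.onFun, Set.disjoint_left]
    intro ω h1 h2
    refine hne (funext fun j => ?_)
    have e1 := h1 (j : ℕ) (by omega)
    have e2 := h2 (j : ℕ) (by omega)
    rw [hxofy y j] at e1
    rw [hxofy y' j] at e2
    rw [← e1, ← e2]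
  rw [hset, measure_biUnion_finset hdisj (fun y _ => measCylEq n (xof n y))]
  have := fun y => hμ.2 s n (xof n y)
  rw [Finset.sum_congr rfl fun y _ => this y]
  rw [hT, Finset.sum_filter]
  refine Finset.sum_congr rfl fun y _ => ?_
  by_cases h : ∀ i ≤ n, xof n y i ∈ A i <;>
    by_cases h2 : xof n y 0 = s <;> simp [h, h2]

lemma meas_cyl_zero (μ : S → Measure (ℕ → S)) (hμ : IsPathMeasure P μ) (s : S) (n : ℕ)
    (A : ℕ → Set S)
    (hz : ∀ x : ℕ → S, x 0 = s → (∀ i ≤ n, x i ∈ A i) →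
      ∏ i ∈ Finset.range n, (P (x i)) (x (i+1)) = 0) :
    μ s {ω | ∀ i ≤ n, ω i ∈ A i} = 0 := by
  rw [meas_cyl P μ hμ s n A]
  refine Finset.sum_eq_zero fun y _ => ?_
  by_cases h1 : ∀ i ≤ n, xof n y i ∈ A i
  · by_cases h2 : xof n y 0 = s
    · rw [hz (xof n y) h2 h1]; simp
    · simp [h2]
  · simp [h1]

lemma meas_Bev (μ : S → Measure (ℕ → S)) (hμ : IsPathMeasure P μ) (s : S) (n : ℕ) :
    μ s {ω | ∀ i ≤ n, ω i ∈ Bset P Acc} = gfun P Acc n s := by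
  rw [meas_cyl P μ hμ s n (fun _ => Bset P Acc)]
  exact sum_xof P Acc n s

end Meas

section Hit
variable {Acc : Set S}

lemma hitTime_eq_find {ω : ℕ → S} (h : ∃ t, ω t ∈ Acc) :
    hitTime Acc ω = (Nat.find h : ℝ≥0∞) := by
  apply le_antisymm
  · exact iInf₂_le (Nat.find h) (Nat.find_spec h)
  · exact le_iInf₂ fun t ht => Nat.cast_le.mpr (Nat.find_min' h ht)

lemma hitTime_eq_top {ω : ℕ → S} (h : ¬∃ t, ω t ∈ Acc) : hitTime Acc ω = ⊤ := by
  push_neg at h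
  unfold hitTime
  simp [h]

lemma hitTime_lt_top_iff {ω : ℕ → S} : hitTime Acc ω < ⊤ ↔ ∃ t, ω t ∈ Acc := by
  constructor
  · intro h
    by_contra hc
    rw [hitTime_eq_top hc] at h
    exact lt_irrefl _ h
  · intro h
    rw [hitTime_eq_find h]
    exact ENNReal.natCast_lt_top _

lemma lt_hitTime_iff {n : ℕ} {ω : ℕ → S} :
    (n : ℝ≥0∞) < hitTime Acc ω ↔ ∀ i ≤ n, ω i ∉ Acc := by
  by_cases h : ∃ t, ω t ∈ Acc
  · rw [hitTime_eq_find h, Nat.cast_lt]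
    constructor
    · intro hlt i hi hacc
      have := Nat.find_min' h hacc
      omega
    · intro hall
      by_contra hc
      push_neg at hc
      exact hall _ hc (Nat.find_spec h)
  · rw [hitTime_eq_top h]
    push_neg at h
    simp [h]

lemma tsum_ind (k : ℕ) :
    ∑' n : ℕ, (if (n:ℝ≥0∞) < (k:ℕ) then (1:ℝ≥0∞) else 0) = k := by
  rw [tsum_eq_sum (s := Finset.range k)
    (fun n hn => if_neg fun hc => hn (Finset.mem_range.mpr (Nat.cast_lt.mp hc)))]
  rw [Finset.sum_congr rfl fun n hn =>
    if_pos (Nat.cast_lt.mpr (Finset.mem_range.mp hn))]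
  simp

lemma hitTime_tsum (ω : ℕ → S) :
    hitTime Acc ω = ∑' n : ℕ, (if (n:ℝ≥0∞) < hitTime Acc ω then (1:ℝ≥0∞) else 0) := by
  by_cases h : ∃ t, ω t ∈ Acc
  · rw [hitTime_eq_find h]
    exact (tsum_ind _).symm
  · rw [hitTime_eq_top h]
    rw [tsum_congr fun n => if_pos (ENNReal.natCast_lt_top n)]
    exact (ENNReal.tsum_const_eq_top_of_ne_zero one_ne_zero).symm

variable [MeasurableSpace S] [MeasurableSingletonClass S]

lemma measurable_hitTime : Measurable (hitTime Acc : (ℕ → S) → ℝ≥0∞) := by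
  have : (hitTime Acc : (ℕ → S) → ℝ≥0∞)
      = fun ω => ⨅ t : ℕ, (if ω t ∈ Acc then (t : ℝ≥0∞) else ⊤) := by
    funext ω
    unfold hitTime
    refine iInf_congr fun t => ?_
    by_cases h : ω t ∈ Acc <;> simp [h]
  rw [this]
  refine Measurable.iInf fun t => Measurable.ite ?_ measurable_const measurable_const
  exact (measurable_pi_apply t) (measSet Acc)

end Hit

section Main
variable [MeasurableSpace S] [MeasurableSingletonClass S]

lemma part1 (P : S → PMF S) (Acc : Set S) (μ : S → Measure (ℕ → S))
    (hμ : IsPathMeasure P μ) (s : S) :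
    (∫⁻ ω in {ω | hitTime Acc ω < ⊤}, hitTime Acc ω ∂ (μ s)) ≠ ⊤ := by
  haveI := hμ.1 s
  -- ω 0 = s almost surely
  have hω0 : μ s {ω | ω 0 = s} = 1 := by
    have h2 := hμ.2 s 0 (fun _ => s)
    have hsetid : {ω : ℕ → S | ∀ i ≤ 0, ω i = (fun _ => s) i} = {ω | ω 0 = s} := by
      ext ω
      simp only [Set.mem_setOf_eq, Nat.le_zero]
      exact ⟨fun h => h 0 rfl, fun h i hi => hi ▸ h⟩
    rw [hsetid] at h2
    simpa using h2
  have hm0 : MeasurableSet {ω : ℕ → S | ω 0 = s} := by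
    have : {ω : ℕ → S | ω 0 = s} = (fun ω : ℕ → S => ω 0) ⁻¹' {s} := rfl
    rw [this]
    exact (measurable_pi_apply 0) (measSet {s})
  have hcompl : μ s {ω | ω 0 ≠ s} = 0 := by
    have : {ω : ℕ → S | ω 0 ≠ s} = {ω : ℕ → S | ω 0 = s}ᶜ := rfl
    rw [this, measure_compl hm0 (measure_ne_top _ _), hω0, measure_univ]
    simp
  -- the null set of bad transitions
  set Z : Set (ℕ → S) := {ω | ω 0 ≠ s} ∪ ⋃ t : ℕ, {ω | (P (ω t)) (ω (t+1)) = 0} with hZdef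
  have hZ : μ s Z = 0 := by
    refine measure_union_null hcompl (measure_iUnion_null fun t => ?_)
    have hsub : {ω : ℕ → S | (P (ω t)) (ω (t+1)) = 0} ⊆
        ⋃ p : S × S,
          {ω : ℕ → S | ω t = p.1 ∧ ω (t+1) = p.2 ∧ (P p.1) p.2 = 0} := by
      intro ω hω
      exact Set.mem_iUnion.mpr ⟨(ω t, ω (t+1)), rfl, rfl, hω⟩
    refine measure_mono_null hsub (measure_iUnion_null fun p => ?_)
    by_cases hp : (P p.1) p.2 = 0
    · have hsub2 : {ω : ℕ → S | ω t = p.1 ∧ ω (t+1) = p.2 ∧ (P p.1) p.2 = 0}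
          ⊆ {ω : ℕ → S | ω t = p.1 ∧ ω (t+1) = p.2} := fun ω hω => ⟨hω.1, hω.2.1⟩
      refine measure_mono_null hsub2 ?_
      have hAeq : {ω : ℕ → S | ω t = p.1 ∧ ω (t+1) = p.2}
          = {ω : ℕ → S | ∀ i ≤ t+1, ω i ∈
              ((if i = t then ({p.1} : Set S) else Set.univ) ∩
               (if i = t+1 then ({p.2} : Set S) else Set.univ))} := by
        ext ω
        simp only [Set.mem_setOf_eq, Set.mem_inter_iff]
        constructor
        · rintro ⟨h1, h2⟩ i hi
          constructor
          · split_ifs with hit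
            · rw [hit]; exact h1
            · trivial
          · split_ifs with hit
            · rw [hit]; exact h2
            · trivial
        · intro h
          have ha := (h t (by omega)).1
          have hb := (h (t+1) (by omega)).2
          rw [if_pos rfl] at ha
          rw [if_pos rfl] at hb
          exact ⟨ha, hb⟩
      rw [hAeq]
      refine meas_cyl_zero P μ hμ s (t+1) _ fun x hx0 hmem => ?_

      have ha := (hmem t (by omega)).1
      have hb := (hmem (t+1) (by omega)).2
      rw [if_pos rfl] at ha
      rw [if_pos rfl] at hb
      refine Finset.prod_eq_zero (Finset.self_mem_range_succ t) ?_
      rw [ha, hb]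
      exact hp
    · exact measure_mono_null (fun ω hω => (hp hω.2.2).elim) (measure_empty)
  by_cases hsA : s ∈ Acc
  · -- hitTime = 0 a.e.
    have hae : ∀ᵐ ω ∂(μ s), hitTime Acc ω = 0 := by
      have hsub : {ω : ℕ → S | ¬ hitTime Acc ω = 0} ⊆ {ω | ω 0 ≠ s} := by
        intro ω hω h0
        refine hω (le_antisymm ?_ zero_le)
        have := iInf₂_le (f := fun (t:ℕ) (_ : ω t ∈ Acc) => (t:ℝ≥0∞)) 0 (h0 ▸ hsA)
        simpa [hitTime] using this
      exact measure_mono_null hsub hcompl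
    have : (∫⁻ ω in {ω | hitTime Acc ω < ⊤}, hitTime Acc ω ∂ (μ s))
        = ∫⁻ _ in {ω | hitTime Acc ω < ⊤}, 0 ∂ (μ s) :=
      lintegral_congr_ae ((ae_restrict_of_ae hae).mono fun ω h => h)
    rw [this, lintegral_zero]
    exact ENNReal.zero_ne_top
  · by_cases hsG : Good P Acc s
    · -- main case : s ∈ Bset
      have hsB : s ∈ Bset P Acc := ⟨hsG, hsA⟩
      -- choose m and c
      set nfun : S → ℕ := fun u =>
        if h : ∃ n, gfun P Acc n u < 1 then Nat.find h else 0 with hnfun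
      set m : ℕ := (Finset.univ.sup nfun) + 1 with hm
      have hm1 : 1 ≤ m := by omega
      have hgm : ∀ u ∈ Bset P Acc, gfun P Acc m u < 1 := by
        intro u hu
        have hex := exists_gfun_lt_one P Acc hu.1 hu.2
        have h1 : nfun u ≤ m :=
          (Finset.le_sup (f := nfun) (Finset.mem_univ u)).trans (Nat.le_succ _)
        refine lt_of_le_of_lt (gfun_anti P Acc u h1) ?_
        rw [hnfun]
        simp only [dif_pos hex]
        exact Nat.find_spec hex
      set c : ℝ≥0∞ := (Finset.univ.filter (· ∈ Bset P Acc)).sup (gfun P Acc m) with hc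
      have hc1 : c < 1 := by
        rw [hc]
        refine (Finset.sup_lt_iff (by simp : (⊥:ℝ≥0∞) < 1)).mpr fun u hu => ?_
        exact hgm u (Finset.mem_filter.mp hu).2
      have hcb : ∀ u ∈ Bset P Acc, gfun P Acc m u ≤ c := fun u hu =>
        Finset.le_sup (Finset.mem_filter.mpr ⟨Finset.mem_univ u, hu⟩)
      have hpow : ∀ k, gfun P Acc (k*m) s ≤ c^k := by
        intro k
        induction k with
        | zero => simpa using gfun_le_one P Acc 0 s
        | succ k ih =>
            have e : (k+1)*m = k*m + m := by ring
            rw [e, pow_succ]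
            calc gfun P Acc (k*m + m) s ≤ c * gfun P Acc (k*m) s :=
                  gfun_add_le P Acc m c hcb (k*m) s
              _ ≤ c * c^k := mul_le_mul_right ih c
              _ = c^k * c := mul_comm _ _
      -- measurability
      have hmA : MeasurableSet {ω : ℕ → S | hitTime Acc ω < ⊤} :=
        measurable_hitTime measurableSet_Iio
      have hmN : ∀ n : ℕ, MeasurableSet {ω : ℕ → S | (n:ℝ≥0∞) < hitTime Acc ω} :=
        fun n => measurable_hitTime measurableSet_Ioi
      -- integral rewriting
      have step1 : (∫⁻ ω in {ω | hitTime Acc ω < ⊤}, hitTime Acc ω ∂ (μ s))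
          = ∑' n : ℕ, μ s ({ω | (n:ℝ≥0∞) < hitTime Acc ω} ∩ {ω | hitTime Acc ω < ⊤}) := by
        rw [lintegral_congr fun ω => hitTime_tsum ω]
        rw [lintegral_tsum fun n => ((Measurable.ite (hmN n) measurable_const
          measurable_const).aemeasurable)]
        refine tsum_congr fun n => ?_
        have hind : (fun ω => if (n:ℝ≥0∞) < hitTime Acc ω then (1:ℝ≥0∞) else 0)
            = Set.indicator {ω : ℕ → S | (n:ℝ≥0∞) < hitTime Acc ω} (fun _ => 1) := by
          funext ω
          rw [Set.indicator_apply]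
          rfl
        rw [hind, lintegral_indicator (hmN n), setLIntegral_one,
          Measure.restrict_apply (hmN n)]
      -- bound each term
      have step2 : ∀ n : ℕ,
          μ s ({ω | (n:ℝ≥0∞) < hitTime Acc ω} ∩ {ω | hitTime Acc ω < ⊤})
            ≤ gfun P Acc n s := by
        intro n
        have hsub : {ω : ℕ → S | (n:ℝ≥0∞) < hitTime Acc ω} ∩ {ω | hitTime Acc ω < ⊤}
            ⊆ {ω : ℕ → S | ∀ i ≤ n, ω i ∈ Bset P Acc} ∪ Z := by
          rintro ω ⟨h1, h2⟩
          by_cases hz : ω ∈ Z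
          · exact Or.inr hz
          · left
            have hnacc : ∀ i ≤ n, ω i ∉ Acc := lt_hitTime_iff.mp h1
            have hz2 : ∀ t : ℕ, (P (ω t)) (ω (t+1)) ≠ 0 := by
              intro t ht
              exact hz (Or.inr (Set.mem_iUnion.mpr ⟨t, ht⟩))
            obtain ⟨T, hT⟩ := hitTime_lt_top_iff.mp h2
            have hTn : n < T := by
              by_contra hc
              push_neg at hc
              exact hnacc T hc hT
            intro i hi
            refine ⟨⟨T - i, fun j => ω (i + j), rfl, ?_, ?_⟩, hnacc i hi⟩
            · show ω (i + (T - i)) ∈ Acc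
              rw [show i + (T - i) = T by omega]
              exact hT
            · rw [prod_pos_iff]
              intro j _
              exact pos_iff_ne_zero.mpr (hz2 (i + j))
        calc μ s ({ω | (n:ℝ≥0∞) < hitTime Acc ω} ∩ {ω | hitTime Acc ω < ⊤})
            ≤ μ s ({ω : ℕ → S | ∀ i ≤ n, ω i ∈ Bset P Acc} ∪ Z) := measure_mono hsub
          _ ≤ μ s {ω : ℕ → S | ∀ i ≤ n, ω i ∈ Bset P Acc} + μ s Z := measure_union_le _ _
          _ = gfun P Acc n s := by rw [meas_Bev P Acc μ hμ s n, hZ, add_zero]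
      -- geometric bound
      haveI : NeZero m := ⟨by omega⟩
      have step3 : (∑' n : ℕ, gfun P Acc n s) ≤ ∑' n : ℕ, c ^ (n / m) := by
        refine ENNReal.tsum_le_tsum fun n => ?_
        calc gfun P Acc n s ≤ gfun P Acc ((n/m)*m) s :=
              gfun_anti P Acc s (Nat.div_mul_le_self n m)
          _ ≤ c ^ (n/m) := hpow (n/m)
      have step4 : (∑' n : ℕ, c ^ (n / m)) = (m : ℝ≥0∞) * (1 - c)⁻¹ := by
        have he : ∀ n : ℕ, c ^ (n / m)
            = (fun p : ℕ × Fin m => c ^ p.1) ((Nat.divModEquiv m) n) := by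
          intro n
          rfl
        rw [tsum_congr he, Equiv.tsum_eq (Nat.divModEquiv m) (fun p : ℕ × Fin m => c ^ p.1)]
        rw [show (∑' (b : ℕ × Fin m), c ^ b.1) = ∑' q : ℕ, ∑' _ : Fin m, c ^ q from
          ENNReal.tsum_prod (f := fun q (_ : Fin m) => c ^ q)]
        have hin : ∀ q : ℕ, (∑' _ : Fin m, c ^ q) = (m : ℝ≥0∞) * c ^ q := by
          intro q
          rw [tsum_fintype]
          simp [Finset.sum_const, nsmul_eq_mul]
        rw [tsum_congr hin, ENNReal.tsum_mul_left, ENNReal.tsum_geometric]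
      have hfin : (m : ℝ≥0∞) * (1 - c)⁻¹ ≠ ⊤ := by
        refine ENNReal.mul_ne_top (ENNReal.natCast_ne_top m) ?_
        rw [Ne, ENNReal.inv_eq_top]
        exact (ne_of_gt (tsub_pos_of_lt hc1))
      refine ne_top_of_le_ne_top hfin ?_
      rw [step1]
      calc (∑' n : ℕ, μ s ({ω | (n:ℝ≥0∞) < hitTime Acc ω} ∩ {ω | hitTime Acc ω < ⊤}))
          ≤ ∑' n : ℕ, gfun P Acc n s := ENNReal.tsum_le_tsum step2
        _ ≤ ∑' n : ℕ, c ^ (n / m) := step3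
        _ = (m : ℝ≥0∞) * (1 - c)⁻¹ := step4
    · -- s cannot reach Acc : the event is null
      have hAnull : μ s {ω | hitTime Acc ω < ⊤} = 0 := by
        have hsub : {ω : ℕ → S | hitTime Acc ω < ⊤}
            ⊆ {ω | ω 0 ≠ s} ∪ ⋃ t : ℕ, {ω : ℕ → S | ∀ i ≤ t, ω i ∈
                ((if i = 0 then ({s} : Set S) else Set.univ) ∩
                 (if i = t then Acc else Set.univ))} := by
          intro ω hω
          obtain ⟨t, ht⟩ := hitTime_lt_top_iff.mp hω
          by_cases h0 : ω 0 = s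
          · right
            refine Set.mem_iUnion.mpr ⟨t, fun i hi => ?_⟩
            constructor
            · split_ifs with hi0
              · rw [hi0]; exact h0
              · trivial
            · split_ifs with hit
              · rw [hit]; exact ht
              · trivial
          · exact Or.inl h0
        refine measure_mono_null hsub (measure_union_null hcompl
          (measure_iUnion_null fun t => ?_))
        refine meas_cyl_zero P μ hμ s t _ fun x hx0 hmem => ?_
        by_contra hne
        refine hsG ⟨t, x, hx0, ?_, pos_iff_ne_zero.mpr hne⟩
        have := (hmem t (le_refl t)).2
        rwa [if_pos rfl] at this
      rw [setLIntegral_measure_zero _ _ hAnull]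
      exact ENNReal.zero_ne_top

end Main

end HitAux

/-- the hitting time of `Acc` has finite expectation on the event that the
chain visits `Acc`; hence the conditional expectation given visiting `Acc` is finite, and
its supremum over the states from which `Acc` is visited with positive probability is
finite. -/
theorem hittingTime_integral_finite
    [Fintype S] [Nonempty S] [MeasurableSpace S] [MeasurableSingletonClass S]
    (P : S → PMF S) (Acc : Set S) (μ : S → Measure (ℕ → S))
    (hμ : IsPathMeasure P μ) :
    (∀ s : S, (∫⁻ ω in {ω | hitTime Acc ω < ⊤}, hitTime Acc ω ∂ (μ s)) ≠ ⊤) ∧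
    (∀ s : S, 0 < μ s {ω | hitTime Acc ω < ⊤} →
      (∫⁻ ω in {ω | hitTime Acc ω < ⊤}, hitTime Acc ω ∂ (μ s)) /
        μ s {ω | hitTime Acc ω < ⊤} ≠ ⊤) ∧
    (⨆ s ∈ {s : S | 0 < μ s {ω | hitTime Acc ω < ⊤}},
      (∫⁻ ω in {ω | hitTime Acc ω < ⊤}, hitTime Acc ω ∂ (μ s)) /
        μ s {ω | hitTime Acc ω < ⊤}) ≠ ⊤ := by
  have p2 : ∀ s : S, 0 < μ s {ω | hitTime Acc ω < ⊤} →
      (∫⁻ ω in {ω | hitTime Acc ω < ⊤}, hitTime Acc ω ∂ (μ s)) /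
        μ s {ω | hitTime Acc ω < ⊤} ≠ ⊤ := by
    intro s hs heq
    rw [ENNReal.div_eq_top] at heq
    rcases heq with ⟨_, h0⟩ | ⟨ha, _⟩
    · exact hs.ne' h0
    · exact HitAux.part1 P Acc μ hμ s ha
  refine ⟨fun s => HitAux.part1 P Acc μ hμ s, p2, ?_⟩
  rw [← lt_top_iff_ne_top]
  set F : S → ℝ≥0∞ := fun s =>
    (∫⁻ ω in {ω | hitTime Acc ω < ⊤}, hitTime Acc ω ∂ (μ s)) /
      μ s {ω | hitTime Acc ω < ⊤} with hF
  have h1 : (⨆ s ∈ {s : S | 0 < μ s {ω | hitTime Acc ω < ⊤}}, F s)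
      ≤ (Finset.univ.filter
          (fun s : S => 0 < μ s {ω | hitTime Acc ω < ⊤})).sup F := by
    rw [Finset.sup_eq_iSup]
    refine iSup_le fun s => iSup_le fun hs => ?_
    exact le_iSup₂ (f := fun s (_ : s ∈ Finset.univ.filter
      (fun s : S => 0 < μ s {ω | hitTime Acc ω < ⊤})) => F s) s
      (Finset.mem_filter.mpr ⟨Finset.mem_univ s, hs⟩)
  refine lt_of_le_of_lt h1 ((Finset.sup_lt_iff (by simp)).mpr fun s hs => ?_)
  rw [lt_top_iff_ne_top]
  exact p2 s (Finset.mem_filter.mp hs).2
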